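/- Let m ∈ ℕ, B̃_0 < Ã_1 < B̃_1 < ... < Ã_m < B̃_m with Ã_j ≠ 0, l_0,...,l_m > 0, N_1,...,N_m > 0. Set r̃_j = ((B̃_j − Ã_j)/Ã_j) Π_{i≠j}((B̃_i − Ã_j)/(Ã_i − Ã_j)), α̃_j = r̃_j(Ã_j − B̃_0)l_0/N_j, β̃_j = sqrt(Ã_j l_j/(r̃_j(Ã_j − B̃_0)l_0)), γ̃ = B̃_0(1 + Σ_{j=1}^m r̃_j) l_0. Then α̃_j β̃_j² N_j/l_j = Ã_j for each j = 1,...,m, and each B̃_j (j = 0,...,m) satisfies B̃_j (l_0 + Σ_{i=1}^m Ã_i l_i/(β̃_i²(Ã_i − B̃_j))) = γ̃. -/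

import Mathlib

open Finset

section Aux
open Polynomial Finset

lemma gap_poly_identity (m : ℕ) (A : Fin m → ℝ) (B : Fin (m + 1) → ℝ)
    (c : Fin m → ℝ) (b : ℝ)
    (hinj : Function.Injective (Fin.cons (B 0) A : Fin (m + 1) → ℝ))
    (h0 : (B 0 - b) * ∏ i, (B 0 - A i)
        = ∑ i, B 0 * (c i * ∏ i' ∈ Finset.univ.erase i, (B 0 - A i')))
    (hA : ∀ i : Fin m, A i * (c i * ∏ i' ∈ Finset.univ.erase i, (A i - A i'))
        = - ∏ k, (A i - B k)) :
    ∀ k : Fin (m + 1), (B k - b) * ∏ i, (B k - A i)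
        = ∑ i, B k * (c i * ∏ i' ∈ Finset.univ.erase i, (B k - A i')) := by
  classical
  set F1 : ℝ[X] := (X - C b) * ∏ i, (X - C (A i)) with hF1
  set F2 : ℝ[X] := ∑ i, X * C (c i) * ∏ i' ∈ Finset.univ.erase i, (X - C (A i')) with hF2
  set F3 : ℝ[X] := ∏ k, (X - C (B k)) with hF3
  have hevalF1 : ∀ x : ℝ, F1.eval x = (x - b) * ∏ i, (x - A i) := by
    intro x; simp [hF1, eval_prod]
  have hevalF2 : ∀ x : ℝ, F2.eval x = ∑ i, x * (c i * ∏ i' ∈ Finset.univ.erase i, (x - A i')) := by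
    intro x
    simp only [hF2, eval_finset_sum, eval_mul, eval_X, eval_C, eval_prod, eval_sub]
    exact Finset.sum_congr rfl fun i _ => by ring
  have hevalF3 : ∀ x : ℝ, F3.eval x = ∏ k, (x - B k) := by
    intro x; simp [hF3, eval_prod]
  have hD : F1 - F2 - F3 = 0 := by
    by_cases hD0 : F1 - F2 - F3 = 0
    · exact hD0
    · refine Polynomial.eq_zero_of_natDegree_lt_card_of_eval_eq_zero _ hinj ?_ ?_
      · intro i
        induction i using Fin.cases with
        | zero =>
          simp only [Fin.cons_zero, eval_sub, hevalF1, hevalF2, hevalF3]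
          have h3 : ∏ k, (B 0 - B k) = 0 :=
            Finset.prod_eq_zero (Finset.mem_univ 0) (by ring)
          rw [h3, h0]; ring
        | succ i =>
          simp only [Fin.cons_succ, eval_sub, hevalF1, hevalF2, hevalF3]
          have h1 : ∏ i', (A i - A i') = 0 :=
            Finset.prod_eq_zero (Finset.mem_univ i) (by ring)
          have h2 : ∑ i'', A i * (c i'' * ∏ i' ∈ Finset.univ.erase i'', (A i - A i'))
              = A i * (c i * ∏ i' ∈ Finset.univ.erase i, (A i - A i')) := by
            refine Finset.sum_eq_single i (fun j _ hji => ?_) (by simp)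
            have : ∏ i' ∈ Finset.univ.erase j, (A i - A i') = 0 :=
              Finset.prod_eq_zero (Finset.mem_erase.mpr ⟨Ne.symm hji, Finset.mem_univ i⟩) (by ring)
            rw [this]; ring
          rw [h1, h2, hA i]; ring
      · -- degree bound
        have hcard : Fintype.card (Fin (m + 1)) = m + 1 := Fintype.card_fin _
        rw [hcard]
        have hmon1 : F1.Monic := (monic_X_sub_C b).mul
          (monic_prod_of_monic _ _ fun i _ => monic_X_sub_C (A i))
        have hdeg1 : F1.natDegree = m + 1 := by
          rw [hF1, (monic_X_sub_C b).natDegree_mul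
            (monic_prod_of_monic _ _ fun i _ => monic_X_sub_C (A i)),
            natDegree_X_sub_C, natDegree_prod_of_monic _ _ fun i _ => monic_X_sub_C (A i)]
          simp
          omega
        have hmon3 : F3.Monic := monic_prod_of_monic _ _ fun k _ => monic_X_sub_C (B k)
        have hdeg3 : F3.natDegree = m + 1 := by
          rw [hF3, natDegree_prod_of_monic _ _ fun k _ => monic_X_sub_C (B k)]
          simp
        have hd1 : F1.degree = ((m + 1 : ℕ) : WithBot ℕ) := by
          rw [Polynomial.degree_eq_natDegree hmon1.ne_zero, hdeg1]
        have hd3 : F3.degree = ((m + 1 : ℕ) : WithBot ℕ) := by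
          rw [Polynomial.degree_eq_natDegree hmon3.ne_zero, hdeg3]
        have hsub : (F1 - F3).degree < ((m + 1 : ℕ) : WithBot ℕ) := by
          rw [← hd1]
          exact Polynomial.degree_sub_lt (hd1.trans hd3.symm) hmon1.ne_zero
            (hmon1.leadingCoeff.trans hmon3.leadingCoeff.symm)
        have hdeg2 : F2.natDegree ≤ m := by
          refine Polynomial.natDegree_sum_le_of_forall_le _ _ fun i _ => ?_
          refine (Polynomial.natDegree_mul_le).trans ?_
          have h1 : (X * C (c i) : ℝ[X]).natDegree ≤ 1 := by
            refine (Polynomial.natDegree_mul_le).trans ?_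
            simp
          have h2 : (∏ i' ∈ Finset.univ.erase i, (X - C (A i') : ℝ[X])).natDegree = m - 1 := by
            rw [natDegree_prod_of_monic _ _ fun i' _ => monic_X_sub_C (A i')]
            simp [Finset.card_erase_of_mem]
          have him : (0 : ℕ) < m := i.pos
          omega
        have hd2 : F2.degree < ((m + 1 : ℕ) : WithBot ℕ) := by
          refine lt_of_le_of_lt (Polynomial.degree_le_natDegree) ?_
          exact_mod_cast Nat.lt_succ_of_le hdeg2
        have : (F1 - F2 - F3).degree < ((m + 1 : ℕ) : WithBot ℕ) := by
          rw [sub_right_comm]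
          exact lt_of_le_of_lt (Polynomial.degree_sub_le _ _) (max_lt hsub hd2)
        exact (Polynomial.natDegree_lt_iff_degree_lt hD0).mpr this
  intro k
  have := congrArg (Polynomial.eval (B k)) hD
  simp only [eval_sub, hevalF1, hevalF2, hevalF3, eval_zero] at this
  have h3 : ∏ k', (B k - B k') = 0 :=
    Finset.prod_eq_zero (Finset.mem_univ k) (by ring)
  rw [h3] at this
  linarith [this]

end Aux


/-- Theorem 2 of the paper: with interlacing numbers
`B̃₀ < Ã₁ < B̃₁ < ⋯ < Ã_m < B̃_m`, `Ãⱼ ≠ 0`, lengths `l₀,…,l_m > 0`, `N₁,…,N_m > 0`, and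
the explicit coupling constants
`α̃ⱼ = r̃ⱼ(Ãⱼ − B̃₀)l₀/Nⱼ`, `β̃ⱼ = √(Ãⱼ lⱼ/(r̃ⱼ(Ãⱼ − B̃₀)l₀))`, `γ̃ = B̃₀(1 + ∑ r̃ⱼ)l₀`,
one has `α̃ⱼ β̃ⱼ² Nⱼ/lⱼ = Ãⱼ` and each `B̃ⱼ` solves the gap-endpoint equation
`B̃ⱼ (l₀ + ∑ᵢ Ãᵢ lᵢ/(β̃ᵢ²(Ãᵢ − B̃ⱼ))) = γ̃`.  Here `A j` is `Ã_{j+1}`, `B j` is `B̃_j`,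
`l j` is `l_{j+1}`. -/
theorem prescribed_gap_endpoints
    (m : ℕ) (A : Fin m → ℝ) (B : Fin (m + 1) → ℝ)
    (hinter : ∀ j : Fin m, B j.castSucc < A j ∧ A j < B j.succ)
    (hA0 : ∀ j, A j ≠ 0)
    (l0 : ℝ) (hl0 : 0 < l0) (l : Fin m → ℝ) (hl : ∀ j, 0 < l j)
    (N : Fin m → ℝ) (hN : ∀ j, 0 < N j)
    (r : Fin m → ℝ)
    (hr : ∀ j, r j = (B j.succ - A j) / A j *
      ∏ i ∈ Finset.univ.erase j, (B i.succ - A j) / (A i - A j))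
    (α : Fin m → ℝ) (hα : ∀ j, α j = r j * (A j - B 0) * l0 / N j)
    (β : Fin m → ℝ) (hβ : ∀ j, β j = Real.sqrt (A j * l j / (r j * (A j - B 0) * l0)))
    (γ : ℝ) (hγ : γ = B 0 * (1 + ∑ j, r j) * l0) :
    (∀ j : Fin m, α j * (β j) ^ 2 * N j / l j = A j) ∧
    (∀ k : Fin (m + 1),
      B k * (l0 + ∑ i, A i * l i / ((β i) ^ 2 * (A i - B k))) = γ) := by

  classical
  have hBmono : StrictMono B :=
    Fin.strictMono_iff_lt_succ.mpr fun i => lt_trans (hinter i).1 (hinter i).2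
  have hB0A : ∀ i : Fin m, B 0 < A i := fun i =>
    lt_of_le_of_lt (hBmono.monotone (Fin.zero_le _)) (hinter i).1
  have hAmono : ∀ i j : Fin m, i < j → A i < A j := by
    intro i j hij
    have h3 : (i.succ : Fin (m + 1)) ≤ j.castSucc := by
      rw [Fin.le_def]
      simp only [Fin.val_succ, Fin.coe_castSucc]
      exact hij
    exact lt_of_lt_of_le (hinter i).2
      (le_of_lt (lt_of_le_of_lt (hBmono.monotone h3) (hinter j).1))
  have hAinj : Function.Injective A := by
    intro i j h
    rcases lt_trichotomy i j with h' | h' | h'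
    · exact absurd h (ne_of_lt (hAmono _ _ h'))
    · exact h'
    · exact absurd h.symm (ne_of_lt (hAmono _ _ h'))
  have hAB : ∀ (i : Fin m) (k : Fin (m + 1)), A i ≠ B k := by
    intro i k
    rcases le_or_gt (k : ℕ) (i : ℕ) with h | h
    · have hk : k ≤ i.castSucc := by rw [Fin.le_def]; simpa using h
      exact (lt_of_le_of_lt (hBmono.monotone hk) (hinter i).1).ne'
    · have hk : i.succ ≤ k := by rw [Fin.le_def]; simpa using h
      exact ((hinter i).2.trans_le (hBmono.monotone hk)).ne
  -- positivity of r j * A j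
  have hrApos : ∀ j : Fin m, 0 < r j * A j := by
    intro j
    have hprod : 0 < ∏ i ∈ Finset.univ.erase j, (B i.succ - A j) / (A i - A j) := by
      refine Finset.prod_pos fun i hi => ?_
      have hij : i ≠ j := (Finset.mem_erase.mp hi).1
      rcases lt_or_gt_of_ne hij with h' | h'
      · -- i < j : numerator and denominator negative
        have hnum : B i.succ - A j < 0 := by
          have h3 : (i.succ : Fin (m + 1)) ≤ j.castSucc := by
            rw [Fin.le_def]
            simp only [Fin.val_succ, Fin.coe_castSucc]
            exact h'
          have := lt_of_le_of_lt (hBmono.monotone h3) (hinter j).1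
          linarith
        have hden : A i - A j < 0 := by have := hAmono i j h'; linarith
        exact div_pos_of_neg_of_neg hnum hden
      · -- j < i : both positive
        have hnum : 0 < B i.succ - A j := by
          have h1 := hAmono j i h'
          have h2 := (hinter i).2
          linarith
        have hden : 0 < A i - A j := by have := hAmono j i h'; linarith
        exact div_pos hnum hden
    have : r j * A j = (B j.succ - A j) * ∏ i ∈ Finset.univ.erase j, (B i.succ - A j) / (A i - A j) := by
      calc r j * A j
          = (B j.succ - A j) / A j * A j *
            ∏ i ∈ Finset.univ.erase j, (B i.succ - A j) / (A i - A j) := by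
            rw [hr j]; ring
        _ = (B j.succ - A j) * ∏ i ∈ Finset.univ.erase j, (B i.succ - A j) / (A i - A j) := by
            rw [div_mul_cancel₀ _ (hA0 j)]
    rw [this]
    exact mul_pos (by have := (hinter j).2; linarith) hprod
  have hr0 : ∀ j, r j ≠ 0 := by
    intro j hj
    have := hrApos j
    rw [hj, zero_mul] at this
    exact lt_irrefl 0 this
  -- positivity of the sqrt argument
  have hx : ∀ j : Fin m, 0 < A j * l j / (r j * (A j - B 0) * l0) := by
    intro j
    have hBne : A j - B 0 ≠ 0 := sub_ne_zero.mpr (hB0A j).ne'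
    have key : A j * l j / (r j * (A j - B 0) * l0)
        = (r j * A j) * l j / (r j ^ 2 * (A j - B 0) * l0) := by
      rw [div_eq_div_iff (by exact mul_ne_zero (mul_ne_zero (hr0 j) hBne) hl0.ne')
        (by exact mul_ne_zero (mul_ne_zero (pow_ne_zero 2 (hr0 j)) hBne) hl0.ne')]
      ring
    rw [key]
    have hABj : 0 < A j - B 0 := by have := hB0A j; linarith
    have hr2 : 0 < r j ^ 2 :=
      lt_of_le_of_ne (sq_nonneg _) (Ne.symm (pow_ne_zero 2 (hr0 j)))
    exact div_pos (mul_pos (hrApos j) (hl j)) (mul_pos (mul_pos hr2 hABj) hl0)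
  have hβ2 : ∀ j : Fin m, β j ^ 2 = A j * l j / (r j * (A j - B 0) * l0) := fun j => by
    rw [hβ j]; exact Real.sq_sqrt (hx j).le
  have hd0 : ∀ j : Fin m, r j * (A j - B 0) * l0 ≠ 0 := fun j =>
    mul_ne_zero (mul_ne_zero (hr0 j) (sub_ne_zero.mpr (hB0A j).ne')) hl0.ne'
  constructor
  · intro j
    rw [hα j, hβ2 j]
    field_simp
    rw [div_eq_iff (mul_ne_zero (mul_ne_zero (mul_ne_zero (hr0 j) (sub_ne_zero.mpr (hB0A j).ne')) (hN j).ne') (hl j).ne')]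
    ring
  · intro k
    set c : Fin m → ℝ := fun i => r i * (A i - B 0) with hc
    set b : ℝ := B 0 * (1 + ∑ j, r j) with hb
    -- injectivity of the node family
    have hinj : Function.Injective (Fin.cons (B 0) A : Fin (m + 1) → ℝ) := by
      intro a a' hab
      induction a using Fin.cases with
      | zero =>
        induction a' using Fin.cases with
        | zero => rfl
        | succ j =>
          rw [Fin.cons_zero, Fin.cons_succ] at hab
          exact absurd hab (hB0A j).ne
      | succ i =>
        induction a' using Fin.cases with
        | zero =>
          rw [Fin.cons_zero, Fin.cons_succ] at hab
          exact absurd hab.symm (hB0A i).ne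
        | succ j =>
          rw [Fin.cons_succ, Fin.cons_succ] at hab
          exact congrArg Fin.succ (hAinj hab)
    -- evaluation identity at the A i
    have hAeval : ∀ i : Fin m,
        A i * (c i * ∏ i' ∈ Finset.univ.erase i, (A i - A i')) = - ∏ k', (A i - B k') := by
      intro i
      have hks : ∏ k', (A i - B k') = (A i - B 0) * ∏ i' : Fin m, (A i - B i'.succ) :=
        Fin.prod_univ_succ _
      have hstep : (∏ i' ∈ Finset.univ.erase i, (B i'.succ - A i) / (A i' - A i)) *
          ∏ i' ∈ Finset.univ.erase i, (A i - A i')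
          = ∏ i' ∈ Finset.univ.erase i, (A i - B i'.succ) := by
        rw [← Finset.prod_mul_distrib]
        refine Finset.prod_congr rfl fun i' hi' => ?_
        have hne : A i' - A i ≠ 0 :=
          sub_ne_zero.mpr (hAinj.ne (Finset.mem_erase.mp hi').1)
        field_simp
        ring
      calc A i * (c i * ∏ i' ∈ Finset.univ.erase i, (A i - A i'))
          = (B i.succ - A i) / A i * A i * (A i - B 0) *
            ((∏ i' ∈ Finset.univ.erase i, (B i'.succ - A i) / (A i' - A i)) *
              ∏ i' ∈ Finset.univ.erase i, (A i - A i')) := by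
            simp only [hc]
            rw [hr i]; ring
        _ = (B i.succ - A i) * (A i - B 0) *
              ∏ i' ∈ Finset.univ.erase i, (A i - B i'.succ) := by
            rw [div_mul_cancel₀ _ (hA0 i), hstep]
        _ = -((A i - B 0) * ((A i - B i.succ) *
              ∏ i' ∈ Finset.univ.erase i, (A i - B i'.succ))) := by ring
        _ = -((A i - B 0) * ∏ i' : Fin m, (A i - B i'.succ)) := by
            rw [Finset.mul_prod_erase Finset.univ (fun i' => A i - B i'.succ) (Finset.mem_univ i)]
        _ = - ∏ k', (A i - B k') := by rw [hks]
    -- evaluation identity at B 0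
    have h0eval : (B 0 - b) * ∏ i, (B 0 - A i)
        = ∑ i, B 0 * (c i * ∏ i' ∈ Finset.univ.erase i, (B 0 - A i')) := by
      have h1 : ∀ i : Fin m, c i * ∏ i' ∈ Finset.univ.erase i, (B 0 - A i')
          = -(r i * ∏ i', (B 0 - A i')) := by
        intro i
        rw [← Finset.mul_prod_erase Finset.univ (fun i' => B 0 - A i') (Finset.mem_univ i), hc]
        ring
      have h2 : ∑ i, B 0 * (c i * ∏ i' ∈ Finset.univ.erase i, (B 0 - A i'))
          = (-(B 0 * ∏ i', (B 0 - A i'))) * ∑ i, r i := by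
        rw [Finset.mul_sum]
        refine Finset.sum_congr rfl fun i _ => ?_
        rw [h1 i]; ring
      rw [h2, hb]; ring
    have hkey := gap_poly_identity m A B c b hinj h0eval hAeval k
    -- now the final computation
    have hPk : (∏ i, (B k - A i)) ≠ 0 :=
      Finset.prod_ne_zero_iff.mpr fun i _ => sub_ne_zero.mpr (Ne.symm (hAB i k))
    have hterm : ∀ i : Fin m, A i * l i / (β i ^ 2 * (A i - B k)) = c i * l0 / (A i - B k) := by
      intro i
      have h2 : A i * l i ≠ 0 := mul_ne_zero (hA0 i) (hl i).ne'
      have hmul : β i ^ 2 * (A i - B k) = A i * l i * (A i - B k) / (c i * l0) := by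
        rw [hβ2 i]; ring
      rw [hmul, div_div_eq_mul_div, mul_div_mul_left _ _ h2]
    have hterm2 : ∀ i : Fin m, c i * l0 / (A i - B k) * ∏ i', (B k - A i')
        = -(l0 * (c i * ∏ i' ∈ Finset.univ.erase i, (B k - A i'))) := by
      intro i
      have h3 : A i - B k ≠ 0 := sub_ne_zero.mpr (hAB i k)
      rw [← Finset.mul_prod_erase Finset.univ (fun i' => B k - A i') (Finset.mem_univ i)]
      field_simp
      ring
    rw [hγ]
    have hsum : (∑ i, A i * l i / (β i ^ 2 * (A i - B k))) = ∑ i, c i * l0 / (A i - B k) :=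
      Finset.sum_congr rfl fun i _ => hterm i
    rw [hsum]
    refine mul_right_cancel₀ hPk ?_
    have expand : (B k * (l0 + ∑ i, c i * l0 / (A i - B k))) * ∏ i, (B k - A i)
        = B k * l0 * ∏ i, (B k - A i)
          + B k * ∑ i, (c i * l0 / (A i - B k) * ∏ i', (B k - A i')) := by
      rw [← Finset.sum_mul]; ring
    rw [expand]
    have hkey' : B k * ∑ i, (c i * ∏ i' ∈ Finset.univ.erase i, (B k - A i'))
        = (B k - b) * ∏ i', (B k - A i') := by
      rw [Finset.mul_sum]; exact hkey.symm
    have hsum2 : B k * ∑ i, (c i * l0 / (A i - B k) * ∏ i', (B k - A i'))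
        = -(l0 * ((B k - b) * ∏ i', (B k - A i'))) := by
      have e1 : ∑ i, (c i * l0 / (A i - B k) * ∏ i', (B k - A i'))
          = ∑ i, -(l0 * (c i * ∏ i' ∈ Finset.univ.erase i, (B k - A i'))) :=
        Finset.sum_congr rfl fun i _ => hterm2 i
      rw [e1, Finset.sum_neg_distrib, ← Finset.mul_sum]
      linear_combination (-l0) * hkey'
    rw [hsum2]
    ring
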